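/- Let ρ be a Drinfeld A-module with exponential Exp_ρ, let λ ∈ K, and for m ≥ 0 set χ_m := Exp_ρ(λ/θ^{m+1}), so f_λ(t) = Σ_{m≥0} χ_m t^m is the Anderson generating function. Then the Anderson generating function of the n-th prolongation P_n ρ at the point (λ)_j (λ in coordinate j, zeros elsewhere) equals the vector (0,…,0, f_λ, ∂_t^1(f_λ), …, ∂_t^{n+1−j}(f_λ))^T, with the zeros occupying the first j−1 coordinates. -/

import Mathlib

/-- The `c`-th hyperderivative `∂_t^c` on formal power series:
the `m`-th coefficient of `∂_t^c f` is `C(m+c, c)` times the `(m+c)`-th coefficient of `f`. -/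
noncomputable def psHasseDeriv {𝕂 : Type*} [CommRing 𝕂] (c : ℕ) (f : PowerSeries 𝕂) :
    PowerSeries 𝕂 :=
  PowerSeries.mk fun m => ((m + c).choose c : 𝕂) * PowerSeries.coeff (m + c) f

namespace ProlongAux

variable {𝕂 : Type*} [Field 𝕂]

/-- Entries of the negative powers of the prolongation matrix, as a ℕ-indexed function. -/
noncomputable def Mf (θ : 𝕂) (m a b : ℕ) : 𝕂 :=
  if b ≤ a then ((m + (a - b)).choose (a - b) : 𝕂) * θ⁻¹ ^ (m + 1 + (a - b)) else 0

lemma Mf_L1 (θ : 𝕂) (hθ : θ ≠ 0) (a b : ℕ) :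
    Mf θ 0 a b * θ - Mf θ 0 a (b + 1) = if a = b then 1 else 0 := by
  unfold Mf
  by_cases hba : b ≤ a
  · by_cases hba' : b + 1 ≤ a
    · obtain ⟨d, hd⟩ : ∃ d, a - b = d + 1 := ⟨a - (b + 1), by omega⟩
      have hd' : a - (b + 1) = d := by omega
      rw [if_pos hba, if_pos hba', hd, hd', if_neg (by omega)]
      simp only [Nat.zero_add, Nat.choose_self, Nat.cast_one, one_mul]
      rw [show 0 + 1 + (d + 1) = (0 + 1 + d) + 1 by ring, pow_succ, mul_assoc,
        inv_mul_cancel₀ hθ, mul_one]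
      ring
    · have hab : a = b := by omega
      rw [if_pos hba, if_neg hba', if_pos hab]
      have : a - b = 0 := by omega
      rw [this]
      simp [pow_succ, inv_mul_cancel₀ hθ]
  · rw [if_neg hba, if_neg (by omega), if_neg (by omega)]
    ring

lemma Mf_L2 (θ : 𝕂) (hθ : θ ≠ 0) (m a b : ℕ) :
    Mf θ (m + 1) a b * θ - Mf θ (m + 1) a (b + 1) = Mf θ m a b := by
  unfold Mf
  by_cases hba : b ≤ a
  · by_cases hba' : b + 1 ≤ a
    · obtain ⟨d, hd⟩ : ∃ d, a - b = d + 1 := ⟨a - (b + 1), by omega⟩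
      have hd' : a - (b + 1) = d := by omega
      rw [if_pos hba, if_pos hba', if_pos hba, hd, hd']
      have hpow : θ⁻¹ ^ (m + 1 + 1 + (d + 1)) * θ = θ⁻¹ ^ (m + 1 + 1 + d) := by
        rw [show m + 1 + 1 + (d + 1) = (m + 1 + 1 + d) + 1 by ring, pow_succ, mul_assoc,
          inv_mul_cancel₀ hθ, mul_one]
      have hch : (m + 1 + (d + 1)).choose (d + 1)
          = (m + 1 + d).choose d + (m + 1 + d).choose (d + 1) := by
        rw [show m + 1 + (d + 1) = (m + 1 + d) + 1 by ring]
        exact Nat.choose_succ_succ' _ _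
      rw [mul_assoc, hpow, hch]
      have h2 : m + (d + 1) = m + 1 + d := by ring
      have h3 : m + 1 + (d + 1) = m + 1 + 1 + d := by ring
      rw [h2, h3]
      push_cast
      ring
    · have : a - b = 0 := by omega
      rw [if_pos hba, if_neg hba', if_pos hba, this]
      simp only [Nat.add_zero, Nat.choose_zero_right, Nat.cast_one, one_mul, sub_zero]
      rw [show m + 1 + 1 + 0 = (m + 1 + 0) + 1 by ring, pow_succ, mul_assoc,
        inv_mul_cancel₀ hθ, mul_one]
  · rw [if_neg hba, if_neg (by omega), if_neg hba]
    ring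

/-- The candidate inverse-power matrix. -/
noncomputable def Mmat (θ : 𝕂) (n m : ℕ) : Matrix (Fin (n + 1)) (Fin (n + 1)) 𝕂 :=
  Matrix.of fun i k : Fin (n + 1) => Mf θ m (i : ℕ) (k : ℕ)

lemma mul_entry (θ : 𝕂) (n m : ℕ)
    (N : Matrix (Fin (n + 1)) (Fin (n + 1)) 𝕂)
    (hN : N = Matrix.of (fun i j : Fin (n + 1) =>
      if i = j then θ else if (i : ℕ) = (j : ℕ) + 1 then -1 else 0))
    (i k : Fin (n + 1)) :
    (Mmat θ n m * N) i k = Mf θ m (i : ℕ) (k : ℕ) * θ - Mf θ m (i : ℕ) ((k : ℕ) + 1) := by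
  subst hN
  rw [Matrix.mul_apply]
  have hterm : ∀ x : Fin (n + 1),
      Mmat θ n m i x * (Matrix.of (fun i j : Fin (n + 1) =>
        if i = j then θ else if (i : ℕ) = (j : ℕ) + 1 then -1 else 0)) x k
      = (if x = k then Mf θ m (i : ℕ) (k : ℕ) * θ else 0)
        + (if (x : ℕ) = (k : ℕ) + 1 then -(Mf θ m (i : ℕ) (x : ℕ)) else 0) := by
    intro x
    simp only [Mmat, Matrix.of_apply]
    by_cases h1 : x = k
    · subst h1
      rw [if_pos rfl, if_pos rfl, if_neg (show ¬((x : ℕ) = (x : ℕ) + 1) by omega), add_zero]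
    · by_cases h2 : (x : ℕ) = (k : ℕ) + 1
      · simp [h1, h2]
      · simp [h1, h2]
  rw [Finset.sum_congr rfl fun x _ => hterm x, Finset.sum_add_distrib]
  have h1 : (∑ x : Fin (n + 1), if x = k then Mf θ m (i : ℕ) (k : ℕ) * θ else 0)
      = Mf θ m (i : ℕ) (k : ℕ) * θ := by
    rw [Finset.sum_ite_eq' Finset.univ k fun _ => Mf θ m (i : ℕ) (k : ℕ) * θ]
    simp
  have h2 : (∑ x : Fin (n + 1), if (x : ℕ) = (k : ℕ) + 1 then -(Mf θ m (i : ℕ) (x : ℕ)) else 0)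
      = -(Mf θ m (i : ℕ) ((k : ℕ) + 1)) := by
    by_cases hk : (k : ℕ) + 1 < n + 1
    · rw [Fintype.sum_eq_single (⟨(k : ℕ) + 1, hk⟩ : Fin (n + 1))]
      · rw [if_pos rfl]
      · intro x hx
        rw [if_neg]
        intro hxv
        exact hx (Fin.ext hxv)
    · have hall : ∀ x : Fin (n + 1),
          (if (x : ℕ) = (k : ℕ) + 1 then -(Mf θ m (i : ℕ) (x : ℕ)) else 0) = 0 := by
        intro x
        rw [if_neg (by omega)]
      rw [Finset.sum_congr rfl fun x _ => hall x, Finset.sum_const_zero]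
      rw [Mf, if_neg (by omega), neg_zero]
  rw [h1, h2]
  ring

lemma left_inv (θ : 𝕂) (hθ : θ ≠ 0) (n : ℕ)
    (N : Matrix (Fin (n + 1)) (Fin (n + 1)) 𝕂)
    (hN : N = Matrix.of (fun i j : Fin (n + 1) =>
      if i = j then θ else if (i : ℕ) = (j : ℕ) + 1 then -1 else 0)) :
    ∀ m : ℕ, Mmat θ n m * N ^ (m + 1) = 1 := by
  intro m
  induction m with
  | zero =>
    rw [pow_one]
    ext i k
    rw [mul_entry θ n 0 N hN i k, Mf_L1 θ hθ, Matrix.one_apply]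
    simp [Fin.ext_iff]
  | succ m ih =>
    have step : Mmat θ n (m + 1) * N = Mmat θ n m := by
      ext i k
      rw [mul_entry θ n (m + 1) N hN i k, Mf_L2 θ hθ]
      rfl
    rw [pow_succ' N (m + 1), ← mul_assoc, step, ih]

end ProlongAux

/-- Let `ρ` be a Drinfeld module with exponential `Exp_ρ`, `λ ∈ K`,
`χ_m := Exp_ρ(λ/θ^{m+1})`, and `f_λ(t) = Σ χ_m t^m` the Anderson generating function.
Then the Anderson generating function of `P_n ρ` at the point `(λ)_j` (with `λ` in
coordinate `j`, zeros elsewhere) equals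
`(0,…,0, f_λ, ∂_t^1 f_λ, …, ∂_t^{n+1−j} f_λ)ᵀ`, with zeros in the first `j−1` coordinates.
Here the Anderson generating function of `P_n ρ` at `y` is
`G_y(t) = Σ_m Exp_{P_nρ}(N^{−m−1} y) t^m` with `N = d(P_nρ)_t`, and `Exp_{P_nρ}` acts
coordinate-wise as `Exp_ρ`. -/
theorem prolongation_AGF {𝕂 : Type*} [Field 𝕂] (θ : 𝕂) (hθ : θ ≠ 0) (n : ℕ)
    (Expρ : 𝕂 → 𝕂) (hadd : ∀ x y, Expρ (x + y) = Expρ x + Expρ y)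
    (ExpPn : (Fin (n + 1) → 𝕂) → Fin (n + 1) → 𝕂)
    (hcoord : ∀ z i, ExpPn z i = Expρ (z i))
    (N : Matrix (Fin (n + 1)) (Fin (n + 1)) 𝕂)
    (hN : N = Matrix.of (fun i j : Fin (n + 1) =>
      if i = j then θ else if (i : ℕ) = (j : ℕ) + 1 then -1 else 0))
    (lam : 𝕂) (j : Fin (n + 1))
    (f : PowerSeries 𝕂) (hf : f = PowerSeries.mk fun m => Expρ (lam / θ ^ (m + 1))) :
    ∀ i : Fin (n + 1),
      (PowerSeries.mk fun m =>
        ExpPn ((N ^ (-(m : ℤ) - 1)).mulVec fun a => if a = j then lam else 0) i) =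
      if (j : ℕ) ≤ (i : ℕ) then psHasseDeriv ((i : ℕ) - (j : ℕ)) f else 0 := by
  intro i
  have h0 : Expρ 0 = 0 := by
    have h := hadd 0 0
    rw [add_zero] at h
    have h' : Expρ 0 + 0 = Expρ 0 + Expρ 0 := by rw [add_zero]; exact h
    exact (add_left_cancel h').symm
  have hnat : ∀ (k : ℕ) (x : 𝕂), Expρ ((k : 𝕂) * x) = (k : 𝕂) * Expρ x := by
    intro k x
    induction k with
    | zero => simp [h0]
    | succ k ih =>
      push_cast
      rw [add_mul, one_mul, hadd, ih, add_mul, one_mul]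
  have hpow : ∀ m : ℕ, N ^ (-(m : ℤ) - 1) = ProlongAux.Mmat θ n m := by
    intro m
    have h1 : (-(m : ℤ) - 1) = -(((m + 1 : ℕ) : ℤ)) := by push_cast; ring
    rw [h1, Matrix.zpow_neg_natCast]
    exact Matrix.inv_eq_left_inv (ProlongAux.left_inv θ hθ n N hN m)
  have hvec : ∀ m : ℕ,
      ((ProlongAux.Mmat θ n m).mulVec fun a => if a = j then lam else 0) i
        = ProlongAux.Mf θ m (i : ℕ) (j : ℕ) * lam := by
    intro m
    simp only [Matrix.mulVec, dotProduct, mul_ite, mul_zero]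
    rw [Finset.sum_ite_eq' Finset.univ j fun a => ProlongAux.Mmat θ n m i a * lam]
    simp [ProlongAux.Mmat]
  by_cases hji : (j : ℕ) ≤ (i : ℕ)
  · rw [if_pos hji]
    set c := (i : ℕ) - (j : ℕ) with hc
    ext m
    rw [PowerSeries.coeff_mk, hcoord, hpow, hvec]
    rw [ProlongAux.Mf, if_pos hji, ← hc]
    rw [psHasseDeriv, PowerSeries.coeff_mk, hf, PowerSeries.coeff_mk]
    have hx : θ⁻¹ ^ (m + 1 + c) * lam = lam / θ ^ (m + c + 1) := by
      rw [div_eq_mul_inv, ← inv_pow, show m + c + 1 = m + 1 + c by ring, mul_comm]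
    rw [mul_assoc, hx, hnat]
  · rw [if_neg hji]
    ext m
    rw [PowerSeries.coeff_mk, hcoord, hpow, hvec]
    rw [ProlongAux.Mf, if_neg hji, zero_mul, h0]
    simp
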